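/- arXiv:1111.7274 — 2 statements merged into one kernel-verified Lean document; each statement's English description precedes it below -/
import Mathlib

section
/- Let G be a Lie group with a right-invariant Riemannian metric, and suppose exp : B(0, r_g) ⊂ 𝔤 → G is a diffeomorphism onto its image containing the ball B_G(e, C_G) for some r_g, C_G > 0. Then for every g ∈ G there exist k ≥ 1 and Z₁, …, Z_k ∈ 𝔤 with |Z_i| < r_g for all i, g = exp(Z_k) ⋯ exp(Z₁), and k ≤ d(e, g)/C_G + 2. -/
/-- Lemma B.4 (GCover), decomposition part: in a group with a right-invariant
geodesic metric, if `exp` maps the ball `B(0, r_g)` of the Lie algebra onto a set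
containing `B_G(e, C_G)`, then every `g` is a product `exp(Z_k) ⋯ exp(Z₁)` of at
most `d(e,g)/C_G + 2` exponentials with `‖Z_i‖ < r_g`. -/
theorem group_exp_product_decomposition {G : Type*} [Group G] [MetricSpace G]
    {E : Type*} [NormedAddCommGroup E] [NormedSpace ℝ E]
    (exp : E → G) (r_g C_G : ℝ) (hr : 0 < r_g) (hCG : 0 < C_G)
    (hinv : ∀ a b c : G, dist (a * c) (b * c) = dist a b)
    (hgeo : ∀ g : G, ∃ γ : ℝ → G, γ 0 = 1 ∧ γ (dist (1 : G) g) = g ∧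
      ∀ s ∈ Set.Icc (0 : ℝ) (dist (1 : G) g), ∀ t ∈ Set.Icc (0 : ℝ) (dist (1 : G) g),
        dist (γ s) (γ t) = |s - t|)
    (hball : Metric.ball (1 : G) C_G ⊆ exp '' Metric.ball (0 : E) r_g) :
    ∀ g : G, ∃ (k : ℕ) (Z : Fin k → E), 1 ≤ k ∧ (∀ i, ‖Z i‖ < r_g) ∧
      g = ((List.ofFn fun i => exp (Z i)).reverse).prod ∧
      (k : ℝ) ≤ dist (1 : G) g / C_G + 2 := by
  intro g
  set D := dist (1 : G) g with hD
  have hD0 : 0 ≤ D := dist_nonneg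
  set k : ℕ := ⌊D / C_G⌋₊ + 1 with hk
  have hk0 : 0 < k := Nat.succ_pos _
  have hkR : (0 : ℝ) < (k : ℝ) := by exact_mod_cast hk0
  have hfl : D / C_G < (k : ℝ) := by
    have := Nat.lt_floor_add_one (D / C_G)
    push_cast
    exact_mod_cast this
  have hDk : D / (k : ℝ) < C_G := by
    rw [div_lt_iff₀ hkR]
    calc D = (D / C_G) * C_G := by field_simp
    _ < (k : ℝ) * C_G := by nlinarith
    _ = C_G * k := by ring
  have hDk0 : 0 ≤ D / (k : ℝ) := div_nonneg hD0 hkR.le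
  obtain ⟨γ, hγ0, hγD, hγd⟩ := hgeo g
  have hmem : ∀ n : ℕ, n ≤ k → ((n : ℝ) * D / k) ∈ Set.Icc (0 : ℝ) D := by
    intro n hn
    constructor
    · positivity
    · rw [div_le_iff₀ hkR]
      have : (n : ℝ) ≤ (k : ℝ) := by exact_mod_cast hn
      nlinarith
  have hq : ∀ i : Fin k,
      γ (((i : ℕ) + 1 : ℝ) * D / k) * (γ ((i : ℕ) * D / k))⁻¹
        ∈ exp '' Metric.ball (0 : E) r_g := by
    intro i
    apply hball
    rw [Metric.mem_ball]
    have h1 : (1 : G) = γ ((i : ℕ) * D / k) * (γ ((i : ℕ) * D / k))⁻¹ :=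
      (mul_inv_cancel _).symm
    rw [h1, hinv]
    have hi1 : ((i : ℕ) + 1 : ℝ) * D / k = ((i : ℕ) + 1 : ℕ) * D / k := by push_cast; ring
    have hm1 := hmem ((i : ℕ) + 1) (by omega)
    have hm0 := hmem (i : ℕ) (by omega)
    rw [hi1, hγd _ hm1 _ (by exact hm0)]
    have : ((((i : ℕ) + 1 : ℕ) : ℝ) * D / k) - ((i : ℕ) * D / k) = D / k := by
      push_cast; ring
    rw [this, abs_of_nonneg hDk0]
    exact hDk
  choose Z hZball hZexp using hq
  refine ⟨k, Z, hk0, ?_, ?_, ?_⟩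
  · intro i
    have := hZball i
    rwa [mem_ball_zero_iff] at this
  · have key : ∀ n : ℕ, ∀ hn : n ≤ k,
        ((List.ofFn fun i : Fin n => exp (Z (Fin.castLE hn i))).reverse).prod
          = γ ((n : ℝ) * D / k) := by
      intro n
      induction n with
      | zero => intro hn; simp [hγ0]
      | succ m ih =>
        intro hn
        have hm : m ≤ k := Nat.le_of_succ_le hn
        have hfun : (fun i : Fin (m + 1) => exp (Z (Fin.castLE hn i)))
            = fun i : Fin (m + 1) => exp (Z (Fin.castLE hn i)) := rfl
        rw [List.ofFn_succ']
        rw [List.concat_eq_append, List.reverse_append, List.reverse_singleton,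
          List.singleton_append, List.prod_cons]
        have hcast : (List.ofFn fun i : Fin m => exp (Z (Fin.castLE hn i.castSucc)))
            = List.ofFn fun i : Fin m => exp (Z (Fin.castLE hm i)) := rfl
        rw [hcast, ih hm]
        have hlast : (Fin.castLE hn (Fin.last m) : Fin k) = ⟨m, hn⟩ := rfl
        rw [hlast, hZexp ⟨m, hn⟩]
        have : ((⟨m, hn⟩ : Fin k) : ℕ) = m := rfl
        rw [mul_assoc, inv_mul_cancel, mul_one]
        push_cast
        ring_nf
    have hfin := key k le_rfl
    have hcast : (fun i : Fin k => exp (Z (Fin.castLE le_rfl i)))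
        = fun i : Fin k => exp (Z i) := by
      funext i; congr 1
    rw [hcast] at hfin
    rw [hfin]
    have : ((k : ℕ) : ℝ) * D / k = D := by
      field_simp
    rw [this, hγD]
  · have hfl2 : (⌊D / C_G⌋₊ : ℝ) ≤ D / C_G := Nat.floor_le (by positivity)
    push_cast [hk]
    linarith
end

section
/- Let K₁, K₂, r, ω, r_g > 0 and N_G ∈ ℕ. Define for m ≥ 1 the sum S_m := Σ_{m'=0}^{m} m^{m'} (K₂ r)^{m'} e^{−ω r_g (m'² + m')/2} (K₁ m^{N_G})^{m'+1}. Then there exist constants K, N' > 0 (depending on K₁, K₂, r, ω, r_g, N_G but not on m) such that S_m ≤ K e^{N' (log m)²} for all m ≥ 2. -/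
open Real Finset

/-- Summation estimate at the heart of Lemma B.7 (VGrowthEst): the sum
`S_m = Σ_{m'=0}^m m^{m'} (K₂r)^{m'} e^{−ωr_g(m'²+m')/2} (K₁ m^{N_G})^{m'+1}` grows
at most like `e^{N'(log m)²}`. -/
theorem vgrowth_sum_estimate (K₁ K₂ r ω r_g : ℝ) (N_G : ℕ)
    (hK₁ : 0 < K₁) (hK₂ : 0 < K₂) (hr : 0 < r) (hω : 0 < ω) (hrg : 0 < r_g) :
    ∃ K N' : ℝ, 0 < K ∧ 0 < N' ∧ ∀ m : ℕ, 2 ≤ m →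
      (∑ m' ∈ Finset.range (m + 1),
          (m : ℝ) ^ m' * (K₂ * r) ^ m' *
            Real.exp (-(ω * r_g * ((m' : ℝ) ^ 2 + m') / 2)) *
            (K₁ * (m : ℝ) ^ N_G) ^ (m' + 1))
        ≤ K * Real.exp (N' * (Real.log m) ^ 2) := by
  set c : ℝ := ω * r_g / 2 with hc
  have hc0 : 0 < c := by positivity
  set D : ℝ := max (K₂ * r) 1 with hD
  set K₁' : ℝ := max K₁ 1 with hK₁'
  set E : ℝ := D * K₁' with hEdef
  have hD1 : 1 ≤ D := le_max_right _ _
  have hK₁1 : 1 ≤ K₁' := le_max_right _ _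
  have hDle : K₂ * r ≤ D := le_max_left _ _
  have hK₁le : K₁ ≤ K₁' := le_max_left _ _
  have hE1 : 1 ≤ E := one_le_mul_of_one_le_of_one_le hD1 hK₁1
  have hlogE : 0 ≤ Real.log E := Real.log_nonneg hE1
  have hlog2 : (0:ℝ) < Real.log 2 := Real.log_pos (by norm_num)
  set B : ℝ := Real.log E / Real.log 2 + (N_G + 1 : ℝ) with hBdef
  have hB0 : 0 < B := by positivity
  clear_value c D K₁' E B
  refine ⟨1, 2 / Real.log 2 + B / Real.log 2 + B ^ 2 / (4 * c), one_pos, by positivity, ?_⟩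
  intro m hm
  have hm1 : (1:ℝ) ≤ (m:ℝ) := by exact_mod_cast Nat.one_le_of_lt hm
  have hm0 : (0:ℝ) < (m:ℝ) := lt_of_lt_of_le one_pos hm1
  set L : ℝ := Real.log m with hLdef
  have hL2 : Real.log 2 ≤ L := Real.log_le_log (by norm_num) (by exact_mod_cast hm)
  have hL0 : 0 < L := lt_of_lt_of_le hlog2 hL2
  set a : ℝ := Real.log E + (N_G + 1 : ℝ) * L with hadef
  have ha0 : 0 ≤ a := by positivity
  clear_value L a
  -- E * m^(N_G+1) = exp a
  have hEm : E * (m:ℝ) ^ (N_G + 1) = Real.exp a := by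
    rw [hadef, Real.exp_add, Real.exp_log (lt_of_lt_of_le one_pos hE1)]
    congr 1
    rw [hLdef, show ((N_G:ℝ) + 1) = ((N_G + 1 : ℕ):ℝ) by push_cast; ring,
      ← Real.log_pow, Real.exp_log (by positivity)]
  -- per-term bound
  have key : ∀ m' ∈ Finset.range (m + 1),
      (m : ℝ) ^ m' * (K₂ * r) ^ m' *
        Real.exp (-(ω * r_g * ((m' : ℝ) ^ 2 + m') / 2)) *
        (K₁ * (m : ℝ) ^ N_G) ^ (m' + 1) ≤ Real.exp (a + a ^ 2 / (4 * c)) := by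
    intro m' _
    have hx0 : (0:ℝ) ≤ (m':ℝ) := Nat.cast_nonneg _
    -- algebraic part
    have halg : (m : ℝ) ^ m' * (K₂ * r) ^ m' * (K₁ * (m : ℝ) ^ N_G) ^ (m' + 1)
        ≤ (E * (m:ℝ) ^ (N_G + 1)) ^ (m' + 1) := by
      have h1 : (K₂ * r) ^ m' ≤ D ^ (m' + 1) := by
        calc (K₂ * r) ^ m' ≤ D ^ m' := by
              apply pow_le_pow_left₀ (by positivity) hDle
          _ ≤ D ^ (m' + 1) := pow_le_pow_right₀ hD1 (Nat.le_succ _)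
      have h2 : (K₁ * (m : ℝ) ^ N_G) ^ (m' + 1) ≤ (K₁' * (m:ℝ) ^ N_G) ^ (m' + 1) := by
        apply pow_le_pow_left₀ (by positivity)
        exact mul_le_mul_of_nonneg_right hK₁le (by positivity)
      have h3 : (m : ℝ) ^ m' * ((m:ℝ) ^ N_G) ^ (m' + 1) ≤ ((m:ℝ) ^ (N_G + 1)) ^ (m' + 1) := by
        rw [← pow_mul, ← pow_mul, ← pow_add]
        apply pow_le_pow_right₀ hm1
        ring_nf
        omega
      calc (m : ℝ) ^ m' * (K₂ * r) ^ m' * (K₁ * (m : ℝ) ^ N_G) ^ (m' + 1)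
          ≤ (m : ℝ) ^ m' * (K₂ * r) ^ m' * (K₁' * (m:ℝ) ^ N_G) ^ (m' + 1) := by
            apply mul_le_mul_of_nonneg_left h2 (by positivity)
        _ = (K₂ * r) ^ m' * K₁' ^ (m' + 1) * ((m : ℝ) ^ m' * ((m:ℝ) ^ N_G) ^ (m' + 1)) := by
            rw [mul_pow]; ring
        _ ≤ D ^ (m' + 1) * K₁' ^ (m' + 1) * ((m:ℝ) ^ (N_G + 1)) ^ (m' + 1) := by
            apply mul_le_mul _ h3 (by positivity) (by positivity)
            exact mul_le_mul_of_nonneg_right h1 (by positivity)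
        _ = (E * (m:ℝ) ^ (N_G + 1)) ^ (m' + 1) := by rw [hEdef, mul_pow, mul_pow]
    have hexp : Real.exp (-(ω * r_g * ((m' : ℝ) ^ 2 + m') / 2))
        ≤ Real.exp (-c * (m':ℝ) ^ 2) := by
      apply Real.exp_le_exp.2
      rw [hc]; nlinarith
    have hT : (m : ℝ) ^ m' * (K₂ * r) ^ m' *
        Real.exp (-(ω * r_g * ((m' : ℝ) ^ 2 + m') / 2)) *
        (K₁ * (m : ℝ) ^ N_G) ^ (m' + 1)
        ≤ Real.exp (a * (m' + 1)) * Real.exp (-c * (m':ℝ) ^ 2) := by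
      have : (m : ℝ) ^ m' * (K₂ * r) ^ m' *
          Real.exp (-(ω * r_g * ((m' : ℝ) ^ 2 + m') / 2)) *
          (K₁ * (m : ℝ) ^ N_G) ^ (m' + 1)
          = ((m : ℝ) ^ m' * (K₂ * r) ^ m' * (K₁ * (m : ℝ) ^ N_G) ^ (m' + 1)) *
            Real.exp (-(ω * r_g * ((m' : ℝ) ^ 2 + m') / 2)) := by ring
      rw [this]
      apply mul_le_mul _ hexp (Real.exp_pos _).le (Real.exp_pos _).le
      calc (m : ℝ) ^ m' * (K₂ * r) ^ m' * (K₁ * (m : ℝ) ^ N_G) ^ (m' + 1)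
          ≤ (E * (m:ℝ) ^ (N_G + 1)) ^ (m' + 1) := halg
        _ = Real.exp (a * (m' + 1)) := by
            rw [hEm, ← Real.exp_nat_mul]; congr 1; push_cast; ring
    calc _ ≤ Real.exp (a * (m' + 1)) * Real.exp (-c * (m':ℝ) ^ 2) := hT
      _ = Real.exp (a * (m' + 1) + -c * (m':ℝ) ^ 2) := (Real.exp_add _ _).symm
      _ ≤ Real.exp (a + a ^ 2 / (4 * c)) := by
          apply Real.exp_le_exp.2
          have hq0 : 0 ≤ (a - 2 * c * (m':ℝ)) ^ 2 / (4 * c) := by positivity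
          have hq : (a - 2 * c * (m':ℝ)) ^ 2 / (4 * c)
              = a ^ 2 / (4 * c) - a * (m':ℝ) + c * (m':ℝ) ^ 2 := by
            field_simp; ring
          rw [hq] at hq0
          linarith
  have hsum : (∑ m' ∈ Finset.range (m + 1),
      (m : ℝ) ^ m' * (K₂ * r) ^ m' *
        Real.exp (-(ω * r_g * ((m' : ℝ) ^ 2 + m') / 2)) *
        (K₁ * (m : ℝ) ^ N_G) ^ (m' + 1))
      ≤ (m + 1 : ℝ) * Real.exp (a + a ^ 2 / (4 * c)) := by
    calc _ ≤ ∑ _m' ∈ Finset.range (m + 1), Real.exp (a + a ^ 2 / (4 * c)) :=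
          Finset.sum_le_sum key
      _ = (m + 1 : ℝ) * Real.exp (a + a ^ 2 / (4 * c)) := by
          rw [Finset.sum_const, Finset.card_range]; push_cast; ring
  have hm1e : (m + 1 : ℝ) ≤ Real.exp (2 * L) := by
    have : Real.exp (2 * L) = (m:ℝ) ^ 2 := by
      rw [hLdef, show (2:ℝ) * Real.log m = ((2:ℕ):ℝ) * Real.log m by norm_num,
        ← Real.log_pow, Real.exp_log (by positivity)]
    rw [this]
    have : (2:ℝ) ≤ (m:ℝ) := by exact_mod_cast hm
    nlinarith
  have ha_le : a ≤ B * L := by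
    rw [hadef, hBdef]
    have : Real.log E ≤ Real.log E / Real.log 2 * L := by
      rw [div_mul_eq_mul_div, le_div_iff₀ hlog2]
      exact mul_le_mul_of_nonneg_left hL2 hlogE
    linarith
  calc (∑ m' ∈ Finset.range (m + 1),
          (m : ℝ) ^ m' * (K₂ * r) ^ m' *
            Real.exp (-(ω * r_g * ((m' : ℝ) ^ 2 + m') / 2)) *
            (K₁ * (m : ℝ) ^ N_G) ^ (m' + 1))
      ≤ (m + 1 : ℝ) * Real.exp (a + a ^ 2 / (4 * c)) := hsum
    _ ≤ Real.exp (2 * L) * Real.exp (a + a ^ 2 / (4 * c)) :=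
        mul_le_mul_of_nonneg_right hm1e (Real.exp_pos _).le
    _ = Real.exp (2 * L + (a + a ^ 2 / (4 * c))) := (Real.exp_add _ _).symm
    _ ≤ 1 * Real.exp ((2 / Real.log 2 + B / Real.log 2 + B ^ 2 / (4 * c)) * L ^ 2) := by
        rw [one_mul]
        apply Real.exp_le_exp.2
        have hLL : L ≤ L ^ 2 / Real.log 2 := by
          rw [le_div_iff₀ hlog2]
          calc L * Real.log 2 ≤ L * L := mul_le_mul_of_nonneg_left hL2 hL0.le
            _ = L ^ 2 := (pow_two L).symm
        have h1 : 2 * L ≤ 2 / Real.log 2 * L ^ 2 := by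
          calc 2 * L ≤ 2 * (L ^ 2 / Real.log 2) := by linarith
            _ = 2 / Real.log 2 * L ^ 2 := by ring
        have h2 : a ≤ B / Real.log 2 * L ^ 2 := by
          calc a ≤ B * L := ha_le
            _ ≤ B * (L ^ 2 / Real.log 2) := mul_le_mul_of_nonneg_left hLL hB0.le
            _ = B / Real.log 2 * L ^ 2 := by ring
        have h3 : a ^ 2 / (4 * c) ≤ B ^ 2 / (4 * c) * L ^ 2 := by
          have haBL : a ^ 2 ≤ (B * L) ^ 2 := by
            rw [pow_two, pow_two]
            exact mul_self_le_mul_self ha0 ha_le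
          calc a ^ 2 / (4 * c) ≤ (B * L) ^ 2 / (4 * c) :=
                (div_le_div_iff_of_pos_right (by positivity)).2 haBL
            _ = B ^ 2 / (4 * c) * L ^ 2 := by ring
        have hsplit : (2 / Real.log 2 + B / Real.log 2 + B ^ 2 / (4 * c)) * L ^ 2
            = 2 / Real.log 2 * L ^ 2 + B / Real.log 2 * L ^ 2 + B ^ 2 / (4 * c) * L ^ 2 := by
          ring
        rw [hsplit]
        linarith
end
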